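/- Let P be a transition kernel on a finite set X with stationary distribution π, let B ⊆ X, and suppose that for every x ∈ X and t ≥ 1 the conditional distributions P^t_x(·|B) and π(·|B) are both equal to the uniform distribution on B. Then for every x and t, ‖P^t_x − π‖_TV ≤ ‖P̄^t_{T(x)} − π̄‖_TV + π(X∖B), where T is the indicator-type lumping map x ↦ T(x) with {T = b_0} ⊇ B for some value b_0, P̄ the lumped kernel and π̄ the lumped stationary distribution. -/
import Mathlib


open Finset

noncomputable def stepDist {X : Type*} [Fintype X] (P : X → X → ℝ) (μ : X → ℝ) : X → ℝ :=
  fun y => ∑ x, μ x * P x y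

noncomputable def iterDist {X : Type*} [Fintype X] (P : X → X → ℝ) (μ : X → ℝ) (t : ℕ) :
    X → ℝ := (stepDist P)^[t] μ

noncomputable def delta {X : Type*} [DecidableEq X] (x : X) : X → ℝ :=
  fun z => if z = x then 1 else 0

noncomputable def tvDist {X : Type*} [Fintype X] (μ ν : X → ℝ) : ℝ :=
  (1 / 2) * ∑ x, |μ x - ν x|

noncomputable def lumpDist {X Y : Type*} [Fintype X] [DecidableEq Y] (T : X → Y)
    (μ : X → ℝ) : Y → ℝ := fun y => ∑ x with T x = y, μ x


lemma lump_delta {X Y : Type*} [Fintype X] [DecidableEq X] [DecidableEq Y]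
    (T : X → Y) (x : X) : lumpDist T (delta x) = delta (T x) := by
  funext y
  simp only [lumpDist, delta]
  rw [Finset.sum_ite_eq' (univ.filter fun x' => T x' = y) x (fun _ => (1:ℝ))]
  by_cases h : T x = y <;> simp [h, eq_comm]

lemma lump_step {X Y : Type*} [Fintype X] [Fintype Y] [DecidableEq Y]
    (P : X → X → ℝ) (T : X → Y) (Pbar : Y → Y → ℝ)
    (hlump : ∀ x y, (∑ x' with T x' = y, P x x') = Pbar (T x) y) (μ : X → ℝ) :
    lumpDist T (stepDist P μ) = stepDist Pbar (lumpDist T μ) := by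
  funext y
  simp only [lumpDist, stepDist]
  rw [Finset.sum_comm]
  have h1 : ∀ x : X, ∑ x' with T x' = y, μ x * P x x' = μ x * Pbar (T x) y := by
    intro x; rw [← Finset.mul_sum, hlump]
  rw [Finset.sum_congr rfl fun x _ => h1 x]
  rw [← Finset.sum_fiberwise univ T (fun x => μ x * Pbar (T x) y)]
  refine Finset.sum_congr rfl fun b _ => ?_
  rw [Finset.sum_mul]
  refine Finset.sum_congr rfl fun x hx => ?_
  rw [Finset.mem_filter] at hx
  rw [hx.2]

lemma lump_iter {X Y : Type*} [Fintype X] [Fintype Y] [DecidableEq Y]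
    (P : X → X → ℝ) (T : X → Y) (Pbar : Y → Y → ℝ)
    (hlump : ∀ x y, (∑ x' with T x' = y, P x x') = Pbar (T x) y) (μ : X → ℝ) (t : ℕ) :
    lumpDist T (iterDist P μ t) = iterDist Pbar (lumpDist T μ) t := by
  induction t with
  | zero => simp [iterDist]
  | succ n ih =>
      simp only [iterDist, Function.iterate_succ_apply'] at *
      rw [lump_step P T Pbar hlump, ih]

lemma step_mass {X : Type*} [Fintype X] (P : X → X → ℝ) (hProw : ∀ x, ∑ y, P x y = 1)
    (μ : X → ℝ) : ∑ y, stepDist P μ y = ∑ x, μ x := by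
  simp only [stepDist]
  rw [Finset.sum_comm]
  simp [← Finset.mul_sum, hProw]

lemma iter_mass {X : Type*} [Fintype X] (P : X → X → ℝ) (hProw : ∀ x, ∑ y, P x y = 1)
    (μ : X → ℝ) (t : ℕ) : ∑ y, iterDist P μ t y = ∑ x, μ x := by
  induction t with
  | zero => simp [iterDist]
  | succ n ih =>
      simp only [iterDist, Function.iterate_succ_apply'] at *
      rw [step_mass P hProw, ih]

lemma step_nonneg {X : Type*} [Fintype X] (P : X → X → ℝ) (hP : ∀ x y, 0 ≤ P x y)
    (μ : X → ℝ) (hμ : ∀ x, 0 ≤ μ x) : ∀ y, 0 ≤ stepDist P μ y := by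
  intro y
  exact Finset.sum_nonneg fun x _ => mul_nonneg (hμ x) (hP x y)

lemma iter_nonneg {X : Type*} [Fintype X] (P : X → X → ℝ) (hP : ∀ x y, 0 ≤ P x y)
    (μ : X → ℝ) (hμ : ∀ x, 0 ≤ μ x) (t : ℕ) : ∀ y, 0 ≤ iterDist P μ t y := by
  induction t with
  | zero => simpa [iterDist] using hμ
  | succ n ih =>
      simp only [iterDist, Function.iterate_succ_apply'] at *
      exact step_nonneg P hP _ ih

/-- If the conditional distributions of `P^t_x` and of `π` given the lumping fiber
`B = T⁻¹(b₀)` are both uniform on `B`, then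
`‖P^t_x − π‖_TV ≤ ‖P̄^t_{T x} − π̄‖_TV + π(Bᶜ)`. -/
theorem stmt_6 {X Y : Type*} [Fintype X] [DecidableEq X] [Fintype Y] [DecidableEq Y]
    (P : X → X → ℝ) (hPnonneg : ∀ x y, 0 ≤ P x y) (hProw : ∀ x, ∑ y, P x y = 1)
    (π : X → ℝ) (hπnonneg : ∀ x, 0 ≤ π x) (hπsum : ∑ x, π x = 1)
    (hπstat : stepDist P π = π)
    (T : X → Y) (Pbar : Y → Y → ℝ)
    (hlump : ∀ x y, (∑ x' with T x' = y, P x x') = Pbar (T x) y)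
    (b₀ : Y) (B : Finset X) (hB : B = univ.filter (fun x => T x = b₀)) (hBne : B.Nonempty)
    (hcondP : ∀ (x : X) (t : ℕ), 1 ≤ t → ∀ b ∈ B,
      iterDist P (delta x) t b = (∑ b' ∈ B, iterDist P (delta x) t b') / B.card)
    (hcondπ : ∀ b ∈ B, π b = (∑ b' ∈ B, π b') / B.card)
    (x : X) (t : ℕ) (ht : 1 ≤ t) :
    tvDist (iterDist P (delta x) t) π ≤
      tvDist (iterDist Pbar (delta (T x)) t) (lumpDist T π) + ∑ b ∈ Bᶜ, π b := by
  set μ := iterDist P (delta x) t with hμdef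
  have hμnn : ∀ y, 0 ≤ μ y := iter_nonneg P hPnonneg _ (fun z => by unfold delta; positivity) t
  have hμmass : ∑ y, μ y = 1 := by
    rw [iter_mass P hProw]
    simp [delta]
  set Sμ := ∑ b ∈ B, μ b with hSμ
  set Sπ := ∑ b ∈ B, π b with hSπ
  -- lumped chain
  have hlumpiter : lumpDist T μ = iterDist Pbar (delta (T x)) t := by
    rw [hμdef, lump_iter P T Pbar hlump, lump_delta]
  -- values at b₀
  have hμb0 : lumpDist T μ b₀ = Sμ := by rw [lumpDist, hSμ, hB]
  have hπb0 : lumpDist T π b₀ = Sπ := by rw [lumpDist, hSπ, hB]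
  -- masses of lumped distributions
  have hlumpmass : ∀ ν : X → ℝ, ∑ y, lumpDist T ν y = ∑ z, ν z := by
    intro ν
    simpa [lumpDist] using Finset.sum_fiberwise univ T ν
  -- sum over B of |μ - π|
  have hcard : (0:ℝ) < B.card := by exact_mod_cast Finset.card_pos.2 hBne
  have hBsum : ∑ b ∈ B, |μ b - π b| = |Sμ - Sπ| := by
    have : ∀ b ∈ B, |μ b - π b| = |Sμ - Sπ| / B.card := by
      intro b hb
      rw [hμdef, hcondP x t ht b hb, hcondπ b hb, ← hμdef, ← hSμ, div_sub_div_same, abs_div,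
        abs_of_pos hcard]
    rw [Finset.sum_congr rfl this, Finset.sum_const, nsmul_eq_mul]
    field_simp
  have hBcsum : ∑ b ∈ Bᶜ, |μ b - π b| ≤ (1 - Sμ) + (1 - Sπ) := by
    have h1 : ∑ b ∈ Bᶜ, μ b = 1 - Sμ := by
      have := Finset.sum_add_sum_compl B μ
      rw [hμmass] at this; linarith [this]
    have h2 : ∑ b ∈ Bᶜ, π b = 1 - Sπ := by
      have := Finset.sum_add_sum_compl B π
      rw [hπsum] at this; linarith [this]
    calc ∑ b ∈ Bᶜ, |μ b - π b| ≤ ∑ b ∈ Bᶜ, (μ b + π b) := by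
          refine Finset.sum_le_sum fun b _ => ?_
          have := hμnn b; have := hπnonneg b
          rw [abs_sub_le_iff]; constructor <;> linarith
      _ = (1 - Sμ) + (1 - Sπ) := by rw [Finset.sum_add_distrib, h1, h2]
  -- lower bound for lumped tv
  have hrest : ∑ y ∈ {b₀}ᶜ, (lumpDist T μ y - lumpDist T π y) = Sπ - Sμ := by
    have hμ' := Finset.sum_add_sum_compl {b₀} (lumpDist T μ)
    have hπ' := Finset.sum_add_sum_compl {b₀} (lumpDist T π)
    rw [hlumpmass, hμmass] at hμ'
    rw [hlumpmass, hπsum] at hπ'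
    rw [Finset.sum_sub_distrib]
    simp only [Finset.sum_singleton] at hμ' hπ'
    rw [hμb0] at hμ'; rw [hπb0] at hπ'
    linarith
  have htvbar : |Sμ - Sπ| ≤ tvDist (iterDist Pbar (delta (T x)) t) (lumpDist T π) := by
    rw [← hlumpiter, tvDist]
    have hsplit := Finset.sum_add_sum_compl {b₀} (fun y => |lumpDist T μ y - lumpDist T π y|)
    have habs : |Sπ - Sμ| ≤ ∑ y ∈ {b₀}ᶜ, |lumpDist T μ y - lumpDist T π y| := by
      rw [← hrest]
      exact (abs_sum_le_sum_abs _ _).trans_eq rfl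
    have hb0term : ∑ y ∈ ({b₀} : Finset Y), |lumpDist T μ y - lumpDist T π y| = |Sμ - Sπ| := by
      simp [hμb0, hπb0]
    have h2 : |Sπ - Sμ| = |Sμ - Sπ| := abs_sub_comm _ _
    nlinarith [hsplit, habs]
  -- combine
  have hπBc : ∑ b ∈ Bᶜ, π b = 1 - Sπ := by
    have := Finset.sum_add_sum_compl B π
    rw [hπsum] at this; linarith
  have hLHS : tvDist μ π = (1/2) * (|Sμ - Sπ| + ∑ b ∈ Bᶜ, |μ b - π b|) := by
    rw [tvDist, ← Finset.sum_add_sum_compl B (fun z => |μ z - π z|), hBsum]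
  rw [hLHS, hπBc]
  have habs2 : Sπ - Sμ ≤ |Sμ - Sπ| := by
    rw [abs_sub_comm]; exact le_abs_self _
  nlinarith [hBcsum, htvbar]
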